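/- Let X be a paracompact topological space, k ≥ 1, F ⊆ X closed, g₀ : X → 𝕀^k continuous, α : X → (0, ∞) continuous, and g : X → 𝕀^k continuous with d_k(g(x), g₀(x)) ≤ α(x) for all x ∈ F. Then there exists a continuous g₁ : X → 𝕀^k with g₁|F = g|F and d_k(g₁(x), g₀(x)) ≤ α(x) for all x ∈ X. -/

import Mathlib

/-- The cube `𝕀^k` with the Euclidean metric, as a subset of Euclidean space. -/
def Cube (k : ℕ) : Set (EuclideanSpace ℝ (Fin k)) := {x | ∀ i, x i ∈ Set.Icc (0 : ℝ) 1}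

/-- If `X` is paracompact (Hausdorff), `F ⊆ X` closed, `g₀, g : X → 𝕀^k` continuous,
`α : X → (0,∞)` continuous with `d_k(g(x),g₀(x)) ≤ α(x)` on `F`, then there is a
continuous `g₁ : X → 𝕀^k` with `g₁|F = g|F` and `d_k(g₁(x),g₀(x)) ≤ α(x)` everywhere. -/
theorem stmt6 (k : ℕ) (hk : 1 ≤ k) {X : Type*} [TopologicalSpace X] [T2Space X]
    [ParacompactSpace X]
    (F : Set X) (hF : IsClosed F)
    (g g₀ : X → Cube k) (hg : Continuous g) (hg₀ : Continuous g₀)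
    (α : X → ℝ) (hα : Continuous α) (hαpos : ∀ x, 0 < α x)
    (hle : ∀ x ∈ F, dist (g x) (g₀ x) ≤ α x) :
    ∃ g₁ : X → Cube k, Continuous g₁ ∧ (∀ x ∈ F, g₁ x = g x) ∧
      ∀ x, dist (g₁ x) (g₀ x) ≤ α x := by
  classical
  set G : X → EuclideanSpace ℝ (Fin k) := fun x => (g x : EuclideanSpace ℝ (Fin k)) with hG
  set G₀ : X → EuclideanSpace ℝ (Fin k) := fun x => (g₀ x : EuclideanSpace ℝ (Fin k)) with hG₀
  have hGc : Continuous G := continuous_subtype_val.comp hg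
  have hG₀c : Continuous G₀ := continuous_subtype_val.comp hg₀
  set d : X → ℝ := fun x => dist (G x) (G₀ x) with hd
  have hdc : Continuous d := hGc.dist hG₀c
  set t : X → ℝ := fun x => min (α x) (d x) / d x with ht
  have ht0 : ∀ x, 0 ≤ t x := fun x =>
    div_nonneg (le_min (hαpos x).le dist_nonneg) dist_nonneg
  have ht1 : ∀ x, t x ≤ 1 := fun x =>
    div_le_one_of_le₀ (min_le_right _ _) dist_nonneg
  set f : X → EuclideanSpace ℝ (Fin k) := fun x => G₀ x + t x • (G x - G₀ x) with hf
  have htd : ∀ x, t x * d x = min (α x) (d x) := by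
    intro x
    rcases eq_or_ne (d x) 0 with h | h
    · simp [ht, h, min_eq_right (hαpos x).le]
    · show min (α x) (d x) / d x * d x = min (α x) (d x)
      exact div_mul_cancel₀ _ h
  have hdist : ∀ x, dist (f x) (G₀ x) = min (α x) (d x) := by
    intro x
    rw [dist_eq_norm]
    have : f x - G₀ x = t x • (G x - G₀ x) := add_sub_cancel_left _ _
    rw [this, norm_smul, Real.norm_eq_abs, abs_of_nonneg (ht0 x)]
    rw [show ‖G x - G₀ x‖ = d x from (dist_eq_norm _ _).symm]
    exact htd x
  have hmem : ∀ x, f x ∈ Cube k := by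
    intro x i
    have ha := (g₀ x).2 i
    have hb := (g x).2 i
    have hfxi : f x i = G₀ x i + t x * (G x i - G₀ x i) := rfl
    rw [hfxi]
    constructor
    · nlinarith [ha.1, ha.2, hb.1, hb.2, ht0 x, ht1 x]
    · nlinarith [ha.1, ha.2, hb.1, hb.2, ht0 x, ht1 x]
  have hfc : Continuous f := by
    rw [continuous_iff_continuousAt]
    intro x₀
    rcases eq_or_ne (d x₀) 0 with h | h
    · -- squeeze: dist (f x) (G₀ x₀) ≤ d x + dist (G₀ x) (G₀ x₀) → 0
      have hGG : G x₀ = G₀ x₀ := by rwa [← dist_eq_zero]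
      have hfx₀ : f x₀ = G₀ x₀ := by
        simp [hf, hGG]
      rw [ContinuousAt, hfx₀, Metric.tendsto_nhds]
      intro ε hε
      have h1 : Filter.Tendsto (fun x => d x + dist (G₀ x) (G₀ x₀)) (nhds x₀)
          (nhds 0) := by
        have h2 : Filter.Tendsto (fun x => d x + dist (G₀ x) (G₀ x₀)) (nhds x₀)
            (nhds (d x₀ + dist (G₀ x₀) (G₀ x₀))) :=
          (hdc.tendsto x₀).add ((hG₀c.tendsto x₀).dist
            (tendsto_const_nhds (x := G₀ x₀)))
        simpa [h] using h2
      filter_upwards [h1 (Iio_mem_nhds hε)] with x hx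
      have hxlt : d x + dist (G₀ x) (G₀ x₀) < ε := hx
      calc dist (f x) (G₀ x₀) ≤ dist (f x) (G₀ x) + dist (G₀ x) (G₀ x₀) :=
            dist_triangle _ _ _
        _ ≤ d x + dist (G₀ x) (G₀ x₀) := by
            have := hdist x
            have : dist (f x) (G₀ x) ≤ d x := by rw [hdist x]; exact min_le_right _ _
            linarith
        _ < ε := hxlt
    · have htc : ContinuousAt t x₀ :=
        ContinuousAt.div ((hα.continuousAt).min (hdc.continuousAt))
          hdc.continuousAt h
      exact (hG₀c.continuousAt).add (htc.smul ((hGc.continuousAt).sub hG₀c.continuousAt))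
  refine ⟨fun x => ⟨f x, hmem x⟩, ?_, ?_, ?_⟩
  · exact Continuous.subtype_mk hfc _
  · intro x hx
    apply Subtype.ext
    have hdle : d x ≤ α x := by
      have := hle x hx
      rwa [Subtype.dist_eq] at this
    rcases eq_or_ne (d x) 0 with h | h
    · have hGG : G x = G₀ x := by rwa [← dist_eq_zero]
      simp only [hf]
      rw [hGG]
      simp
      exact hGG.symm
    · have : t x = 1 := by
        rw [ht]; simp only; rw [min_eq_right hdle, div_self h]
      show f x = G x
      simp [hf, this]
  · intro x
    rw [Subtype.dist_eq]
    show dist (f x) (G₀ x) ≤ α x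
    rw [hdist x]
    exact min_le_left _ _
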